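/- Let E be a category with pullbacks and let f : A ⟶ B and g : X ⟶ Y be morphisms. The following are equivalent: (i) for every morphism Z ⟶ B, the pullback f_Z : A ×_B Z ⟶ Z of f along Z ⟶ B satisfies f_Z ⊥ g; (ii) for every morphism Z ⟶ B and every morphism Z' ⟶ Y, the pullbacks f_Z : A ×_B Z ⟶ Z and g_{Z'} : X ×_Y Z' ⟶ Z' satisfy f_Z ⊥ g_{Z'}. (Either condition defines f being fiberwise orthogonal to g.) -/
import Mathlib


open CategoryTheory Limits

/-- `f` is orthogonal to `g` (`f ⊥ g`): every commutative square from `f` to `g` admits a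
unique diagonal filler. -/
def Orth {E : Type*} [Category E] {A B X Y : E} (f : A ⟶ B) (g : X ⟶ Y) : Prop :=
  ∀ (u : A ⟶ X) (v : B ⟶ Y), u ≫ g = f ≫ v →
    ∃! d : B ⟶ X, f ≫ d = u ∧ d ≫ g = v

/-- In a category with pullbacks, for maps `f : A ⟶ B` and `g : X ⟶ Y`,
the condition that every base change of `f` is orthogonal to `g` is equivalent to the condition
that every base change of `f` is orthogonal to every base change of `g` (fiberwise
orthogonality). -/
theorem goodwillie_stmt_6 {E : Type*} [Category E] [HasPullbacks E]
    {A B X Y : E} (f : A ⟶ B) (g : X ⟶ Y) :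
    (∀ {Z P : E} (z : Z ⟶ B) (p : P ⟶ A) (fZ : P ⟶ Z),
        IsPullback p fZ f z → Orth fZ g) ↔
    (∀ {Z P : E} (z : Z ⟶ B) (p : P ⟶ A) (fZ : P ⟶ Z), IsPullback p fZ f z →
      ∀ {Z' Q : E} (z' : Z' ⟶ Y) (q : Q ⟶ X) (gZ' : Q ⟶ Z'), IsPullback q gZ' g z' →
        Orth fZ gZ') := by
  constructor
  · intro h Z P z p fZ hf Z' Q z' q gZ' hg u v huv
    have horth := h z p fZ hf
    have hsq : (u ≫ q) ≫ g = fZ ≫ (v ≫ z') := by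
      rw [Category.assoc, hg.w, ← Category.assoc, huv, Category.assoc]
    obtain ⟨d, ⟨hd1, hd2⟩, hdu⟩ := horth (u ≫ q) (v ≫ z') hsq
    have hdlift : d ≫ g = v ≫ z' := hd2
    refine ⟨hg.lift d v hdlift, ⟨?_, hg.lift_snd _ _ _⟩, ?_⟩
    · apply hg.hom_ext
      · rw [Category.assoc, hg.lift_fst, hd1]
      · rw [Category.assoc, hg.lift_snd, huv]
    · rintro d' ⟨h1, h2⟩
      apply hg.hom_ext
      · rw [hg.lift_fst]
        apply hdu
        constructor
        · rw [← Category.assoc, h1]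
        · rw [Category.assoc, hg.w, ← Category.assoc, h2]
      · rw [hg.lift_snd, h2]
  · intro h Z P z p fZ hf
    have hid : IsPullback (𝟙 X) g g (𝟙 Y) :=
      IsPullback.of_horiz_isIso ⟨by simp⟩
    have := h z p fZ hf (𝟙 Y) (𝟙 X) g hid
    intro u v huv
    obtain ⟨d, ⟨h1, h2⟩, h3⟩ := this u v (by simpa using huv)
    exact ⟨d, ⟨h1, by simpa using h2⟩, fun d' ⟨k1, k2⟩ => h3 d' ⟨k1, by simpa using k2⟩⟩
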